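/- arXiv:1501.03675 — 7 statements merged into one kernel-verified Lean document; each statement's English description precedes it below -/
import Mathlib

section
/- For a Hom-Lie-Yamaguti algebra (L, [·,·], {·,·,·}, α) and any 1-Hom-cochain f, the composition δ_I² ∘ δ¹ vanishes: {α(x)α(y)δ_I¹f(z,u)} − δ_I¹f({xyz}, α²(u)) − δ_I¹f(α²(z), {xyu}) + δ_{II}¹f(α(x),α(y),[zu]) − [α²(z) δ_{II}¹f(x,y,u)] − [δ_{II}¹f(x,y,z) α²(u)] = 0 for all x,y,z,u ∈ L. -/
/-- A Hom-Lie-Yamaguti algebra over a field `K`. -/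
structure HLY (K L : Type*) [Field K] [AddCommGroup L] [Module K L] where
  br : L →ₗ[K] L →ₗ[K] L
  tr : L →ₗ[K] L →ₗ[K] L →ₗ[K] L
  a : L →ₗ[K] L
  a_br : ∀ x y, a (br x y) = br (a x) (a y)
  a_tr : ∀ x y z, a (tr x y z) = tr (a x) (a y) (a z)
  br_alt : ∀ x, br x x = 0
  tr_alt : ∀ x y, tr x x y = 0
  ax5 : ∀ x y z,
    (br (br x y) (a z) + tr x y z) + (br (br y z) (a x) + tr y z x) +
      (br (br z x) (a y) + tr z x y) = 0
  ax6 : ∀ x y z u,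
    tr (br x y) (a z) (a u) + tr (br y z) (a x) (a u) + tr (br z x) (a y) (a u) = 0
  ax7 : ∀ x y u v,
    tr (a x) (a y) (br u v) = br (tr x y u) (a (a v)) + br (a (a u)) (tr x y v)
  ax8 : ∀ u v x y z,
    tr (a (a u)) (a (a v)) (tr x y z) =
      tr (tr u v x) (a (a y)) (a (a z)) + tr (a (a x)) (tr u v y) (a (a z)) +
        tr (a (a x)) (a (a y)) (tr u v z)

variable {K L : Type*} [Field K] [AddCommGroup L] [Module K L]

/-- First coboundary, binary part: `δ_I¹f(x,y) = [x f(y)] + [f(x) y] − f([xy])`. -/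
def d1I (H : HLY K L) (f : L →ₗ[K] L) (x y : L) : L :=
  H.br x (f y) + H.br (f x) y - f (H.br x y)

/-- First coboundary, ternary part:
`δ_{II}¹f(x,y,z) = {f(x)yz} + {x f(y) z} + {xy f(z)} − f({xyz})`. -/
def d1II (H : HLY K L) (f : L →ₗ[K] L) (x y z : L) : L :=
  H.tr (f x) y z + H.tr x (f y) z + H.tr x y (f z) - f (H.tr x y z)

/-- Second coboundary `δ_I²` (depends on a pair `(f,g)`). -/
def d2I (H : HLY K L) (f : L → L → L) (g : L → L → L → L) (x y z u : L) : L :=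
  H.tr (H.a x) (H.a y) (f z u) - f (H.tr x y z) (H.a (H.a u)) - f (H.a (H.a z)) (H.tr x y u)
    + g (H.a x) (H.a y) (H.br z u) - H.br (H.a (H.a z)) (g x y u)
    - H.br (g x y z) (H.a (H.a u))

/-- Second coboundary `δ_{II}²`. -/
def d2II (H : HLY K L) (g : L → L → L → L) (x y u v w : L) : L :=
  H.tr (H.a (H.a x)) (H.a (H.a y)) (g u v w) - H.tr (g x y u) (H.a (H.a v)) (H.a (H.a w))
    - H.tr (H.a (H.a u)) (g x y v) (H.a (H.a w))
    - H.tr (H.a (H.a u)) (H.a (H.a v)) (g x y w)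
    + g (H.a (H.a x)) (H.a (H.a y)) (H.tr u v w)
    - g (H.tr x y u) (H.a (H.a v)) (H.a (H.a w))
    - g (H.a (H.a u)) (H.tr x y v) (H.a (H.a w))
    - g (H.a (H.a u)) (H.a (H.a v)) (H.tr x y w)

/-- The other second coboundary `d_I²`. -/
def c2I (H : HLY K L) (f : L → L → L) (g : L → L → L → L) (x y z : L) : L :=
  (H.br (f x y) (H.a z) + f (H.br x y) (H.a z) + g x y z)
    + (H.br (f y z) (H.a x) + f (H.br y z) (H.a x) + g y z x)
    + (H.br (f z x) (H.a y) + f (H.br z x) (H.a y) + g z x y)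

/-- The other second coboundary `d_{II}²`. -/
def c2II (H : HLY K L) (f : L → L → L) (g : L → L → L → L) (x y z u : L) : L :=
  (H.tr (f x y) (H.a z) (H.a u) + g (H.br x y) (H.a z) (H.a u))
    + (H.tr (f y z) (H.a x) (H.a u) + g (H.br y z) (H.a x) (H.a u))
    + (H.tr (f z x) (H.a y) (H.a u) + g (H.br z x) (H.a y) (H.a u))

/-- `(f,g)` is a 2-cocycle pair. -/
def IsCocycle (H : HLY K L) (f : L → L → L) (g : L → L → L → L) : Prop :=
  (∀ x y z u, d2I H f g x y z u = 0) ∧ (∀ x y u v w, d2II H g x y u v w = 0) ∧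
    (∀ x y z, c2I H f g x y z = 0) ∧ (∀ x y z u, c2II H f g x y z u = 0)

/-- `δ_I² ∘ δ¹ = 0`. -/
theorem d2I_d1_eq_zero (H : HLY K L) (f : L →ₗ[K] L)
    (hf : ∀ x, f (H.a x) = H.a (f x)) :
    ∀ x y z u,
      H.tr (H.a x) (H.a y) (d1I H f z u) - d1I H f (H.tr x y z) (H.a (H.a u))
        - d1I H f (H.a (H.a z)) (H.tr x y u) + d1II H f (H.a x) (H.a y) (H.br z u)
        - H.br (H.a (H.a z)) (d1II H f x y u) - H.br (d1II H f x y z) (H.a (H.a u)) = 0 := by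
  intro x y z u
  simp only [d1I, d1II, map_add, map_sub, LinearMap.add_apply, LinearMap.sub_apply, hf,
    H.ax7 x y z (f u), H.ax7 x y (f z) u, H.ax7 (f x) y z u, H.ax7 x (f y) z u,
    H.ax7 x y z u]
  abel
end

section
/- For a Hom-Lie-Yamaguti algebra (L, [·,·], {·,·,·}, α) and any 1-Hom-cochain f, δ_{II}²(δ_{II}¹f) = 0; explicitly, {α²(x)α²(y)δ_{II}¹f(u,v,w)} − {δ_{II}¹f(x,y,u)α²(v)α²(w)} − {α²(u)δ_{II}¹f(x,y,v)α²(w)} − {α²(u)α²(v)δ_{II}¹f(x,y,w)} + δ_{II}¹f(α²(x),α²(y),{uvw}) − δ_{II}¹f({xyu},α²(v),α²(w)) − δ_{II}¹f(α²(u),{xyv},α²(w)) − δ_{II}¹f(α²(u),α²(v),{xyw}) = 0 for all x,y,u,v,w ∈ L. -/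
variable {K L : Type*} [Field K] [AddCommGroup L] [Module K L]

set_option maxHeartbeats 2000000 in
/-- `δ_{II}²(δ_{II}¹f) = 0`. -/
theorem d2II_d1II_eq_zero (H : HLY K L) (f : L →ₗ[K] L)
    (hf : ∀ x, f (H.a x) = H.a (f x)) :
    ∀ x y u v w,
      H.tr (H.a (H.a x)) (H.a (H.a y)) (d1II H f u v w)
        - H.tr (d1II H f x y u) (H.a (H.a v)) (H.a (H.a w))
        - H.tr (H.a (H.a u)) (d1II H f x y v) (H.a (H.a w))
        - H.tr (H.a (H.a u)) (H.a (H.a v)) (d1II H f x y w)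
        + d1II H f (H.a (H.a x)) (H.a (H.a y)) (H.tr u v w)
        - d1II H f (H.tr x y u) (H.a (H.a v)) (H.a (H.a w))
        - d1II H f (H.a (H.a u)) (H.tr x y v) (H.a (H.a w))
        - d1II H f (H.a (H.a u)) (H.a (H.a v)) (H.tr x y w) = 0 := by
  intro x y u v w
  have h1 := H.ax8 x y (f u) v w
  have h2 := H.ax8 x y u (f v) w
  have h3 := H.ax8 x y u v (f w)
  have h4 := H.ax8 x y u v w
  simp only [d1II, map_add, map_sub, LinearMap.add_apply, LinearMap.sub_apply, hf, H.a_tr] 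
  have h5 := H.ax8 (f x) y u v w
  have h6 := H.ax8 x (f y) u v w
  rw [h1, h2, h3, h4, h5, h6]
  simp only [map_add]
  abel
end

section
/- For a Hom-Lie-Yamaguti algebra (L, [·,·], {·,·,·}, α) and any 1-Hom-cochain f, d_I²(δ_I¹f, δ_{II}¹f) = 0; explicitly, ↺_{x,y,z}([δ_I¹f(x,y) α(z)] + δ_I¹f([xy], α(z)) + δ_{II}¹f(x,y,z)) = 0 for all x,y,z ∈ L. -/
variable {K L : Type*} [Field K] [AddCommGroup L] [Module K L]

/-- `d_I²(δ_I¹f, δ_{II}¹f) = 0`. -/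
theorem c2I_d1_eq_zero (H : HLY K L) (f : L →ₗ[K] L)
    (hf : ∀ x, f (H.a x) = H.a (f x)) :
    ∀ x y z,
      (H.br (d1I H f x y) (H.a z) + d1I H f (H.br x y) (H.a z) + d1II H f x y z)
        + (H.br (d1I H f y z) (H.a x) + d1I H f (H.br y z) (H.a x) + d1II H f y z x)
        + (H.br (d1I H f z x) (H.a y) + d1I H f (H.br z x) (H.a y) + d1II H f z x y) = 0 := by
  intro x y z
  have h1 := H.ax5 (f x) y z
  have h2 := H.ax5 x (f y) z
  have h3 := H.ax5 x y (f z)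
  have h4 := congrArg f (H.ax5 x y z)
  simp only [map_add, map_zero] at h4
  simp only [d1I, d1II, hf, map_add, map_sub, LinearMap.add_apply, LinearMap.sub_apply]
  linear_combination (norm := abel) h1 + h2 + h3 - h4
end

section
/- For a Hom-Lie-Yamaguti algebra (L, [·,·], {·,·,·}, α) and any 1-Hom-cochain f, d_{II}²(δ_I¹f, δ_{II}¹f) = 0; explicitly, ↺_{x,y,z}({δ_I¹f(x,y) α(z) α(u)} + δ_{II}¹f([xy], α(z), α(u))) = 0 for all x,y,z,u ∈ L. -/
variable {K L : Type*} [Field K] [AddCommGroup L] [Module K L]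

set_option maxHeartbeats 1000000 in
/-- `d_{II}²(δ_I¹f, δ_{II}¹f) = 0`. -/
theorem c2II_d1_eq_zero (H : HLY K L) (f : L →ₗ[K] L)
    (hf : ∀ x, f (H.a x) = H.a (f x)) :
    ∀ x y z u,
      (H.tr (d1I H f x y) (H.a z) (H.a u) + d1II H f (H.br x y) (H.a z) (H.a u))
        + (H.tr (d1I H f y z) (H.a x) (H.a u) + d1II H f (H.br y z) (H.a x) (H.a u))
        + (H.tr (d1I H f z x) (H.a y) (H.a u) + d1II H f (H.br z x) (H.a y) (H.a u)) = 0 := by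
  intro x y z u
  have h1 := H.ax6 x y (f z) u
  have h2 := H.ax6 (f x) y z u
  have h3 := H.ax6 x (f y) z u
  have h4 := H.ax6 x y z (f u)
  have h5 : f (H.tr (H.br x y) (H.a z) (H.a u)) + f (H.tr (H.br y z) (H.a x) (H.a u))
      + f (H.tr (H.br z x) (H.a y) (H.a u)) = 0 := by
    rw [← map_add, ← map_add, H.ax6, map_zero]
  simp only [d1I, d1II, map_add, map_sub, hf, LinearMap.add_apply, LinearMap.sub_apply]
  linear_combination (norm := abel) h1 + h2 + h3 + h4 - h5
end

section
/- Let (f_t, g_t) with f_t = [·,·] + Σ_{i≥1} f_i t^i and g_t = {·,·,·} + Σ_{i≥1} g_i t^i be a one-parameter formal deformation of a Hom-Lie-Yamaguti algebra (L, [·,·], {·,·,·}, α). Then the infinitesimal (f₁, g₁) is a 2-cocycle: (δ_I², δ_{II}²)(f₁, g₁) = (0,0) and (d_I², d_{II}²)(f₁, g₁) = (0,0). -/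
variable {K L : Type*} [Field K] [AddCommGroup L] [Module K L]

/-- A one-parameter formal deformation of the Hom-Lie-Yamaguti algebra `H`,
given by its coefficient maps: `f_t = Σ fᵢ tⁱ`, `g_t = Σ gᵢ tⁱ` with
`f₀ = [·,·]`, `g₀ = {·,·,·}`, subject to the deformation equations
(1')-(8'), which are equivalent to `(L[[t]], f_t, g_t, α)` being a
Hom-Lie-Yamaguti algebra over `K[[t]]`. -/
structure Deform (H : HLY K L) where
  f : ℕ → L →ₗ[K] L →ₗ[K] L
  g : ℕ → L →ₗ[K] L →ₗ[K] L →ₗ[K] L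
  f0 : f 0 = H.br
  g0 : g 0 = H.tr
  fa : ∀ n x y, f n (H.a x) (H.a y) = H.a (f n x y)
  ga : ∀ n x y z, g n (H.a x) (H.a y) (H.a z) = H.a (g n x y z)
  falt : ∀ n x, f n x x = 0
  galt : ∀ n x y, g n x x y = 0
  eq5 : ∀ n, ∀ x y z : L,
    (∑ p ∈ Finset.HasAntidiagonal.antidiagonal n,
      (f p.1 (f p.2 x y) (H.a z) + f p.1 (f p.2 y z) (H.a x) + f p.1 (f p.2 z x) (H.a y)))
      + (g n x y z + g n y z x + g n z x y) = 0
  eq6 : ∀ n, ∀ x y z u : L,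
    ∑ p ∈ Finset.HasAntidiagonal.antidiagonal n,
      (g p.1 (f p.2 x y) (H.a z) (H.a u) + g p.1 (f p.2 y z) (H.a x) (H.a u)
        + g p.1 (f p.2 z x) (H.a y) (H.a u)) = 0
  eq7 : ∀ n, ∀ x y z u : L,
    ∑ p ∈ Finset.HasAntidiagonal.antidiagonal n, g p.1 (H.a x) (H.a y) (f p.2 z u) =
      ∑ p ∈ Finset.HasAntidiagonal.antidiagonal n,
        (f p.1 (g p.2 x y z) (H.a (H.a u)) + f p.1 (H.a (H.a z)) (g p.2 x y u))
  eq8 : ∀ n, ∀ u v x y z : L,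
    ∑ p ∈ Finset.HasAntidiagonal.antidiagonal n, g p.1 (H.a (H.a u)) (H.a (H.a v)) (g p.2 x y z) =
      ∑ p ∈ Finset.HasAntidiagonal.antidiagonal n,
        (g p.1 (g p.2 u v x) (H.a (H.a y)) (H.a (H.a z))
          + g p.1 (H.a (H.a x)) (g p.2 u v y) (H.a (H.a z))
          + g p.1 (H.a (H.a x)) (H.a (H.a y)) (g p.2 u v z))


/-- An equivalence `Φ_t = Σ φᵢ tⁱ` of one-parameter formal deformations,
from `(D.f_t, D.g_t)` to `(D'.f_t, D'.g_t)`:  `φ₀ = id`, `Φ_t ∘ α = α ∘ Φ_t`,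
`Φ_t(f_t(x,y)) = f_t'(Φ_t x, Φ_t y)` and `Φ_t(g_t(x,y,z)) = g_t'(Φ_t x, Φ_t y, Φ_t z)`,
written out coefficientwise. -/
structure DefEquiv (H : HLY K L) (D D' : Deform H) where
  Φ : ℕ → L →ₗ[K] L
  Φ0 : Φ 0 = LinearMap.id
  Φa : ∀ n x, Φ n (H.a x) = H.a (Φ n x)
  hf : ∀ n, ∀ x y : L,
    ∑ p ∈ Finset.HasAntidiagonal.antidiagonal n, Φ p.1 (D.f p.2 x y) =
      ∑ p ∈ Finset.HasAntidiagonal.antidiagonal n, ∑ q ∈ Finset.HasAntidiagonal.antidiagonal p.2,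
        D'.f p.1 (Φ q.1 x) (Φ q.2 y)
  hg : ∀ n, ∀ x y z : L,
    ∑ p ∈ Finset.HasAntidiagonal.antidiagonal n, Φ p.1 (D.g p.2 x y z) =
      ∑ p ∈ Finset.HasAntidiagonal.antidiagonal n, ∑ q ∈ Finset.HasAntidiagonal.antidiagonal p.2, ∑ r ∈ Finset.HasAntidiagonal.antidiagonal q.2,
        D'.g p.1 (Φ q.1 x) (Φ r.1 y) (Φ r.2 z)

set_option maxHeartbeats 1000000 in
/-- The infinitesimal `(f₁, g₁)` of a one-parameter formal deformation is a
2-cocycle. -/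
theorem infinitesimal_isCocycle (H : HLY K L) (D : Deform H) :
    IsCocycle H (fun x y => D.f 1 x y) (fun x y z => D.g 1 x y z) := by
  have hA : (Finset.HasAntidiagonal.antidiagonal 1 : Finset (ℕ × ℕ)) = {(0,1),(1,0)} := by decide
  have hne : ((0,1) : ℕ × ℕ) ∉ ({(1,0)} : Finset (ℕ × ℕ)) := by decide
  refine ⟨fun x y z u => ?_, fun x y u v w => ?_, fun x y z => ?_, fun x y z u => ?_⟩
  · have h := D.eq7 1 x y z u
    simp only [hA, Finset.sum_insert hne, Finset.sum_singleton, D.f0, D.g0] at h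
    simp only [d2I]
    rw [← sub_eq_zero] at h
    rw [← h]; abel
  · have h := D.eq8 1 x y u v w
    simp only [hA, Finset.sum_insert hne, Finset.sum_singleton, D.f0, D.g0] at h
    simp only [d2II]
    rw [← sub_eq_zero] at h
    rw [← h]; abel
  · have h := D.eq5 1 x y z
    simp only [hA, Finset.sum_insert hne, Finset.sum_singleton, D.f0, D.g0] at h
    simp only [c2I]
    rw [← sub_eq_zero] at h
    rw [← h]; abel
  · have h := D.eq6 1 x y z u
    simp only [hA, Finset.sum_insert hne, Finset.sum_singleton, D.f0, D.g0] at h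
    simp only [c2II]
    rw [← sub_eq_zero] at h
    rw [← h]; abel
end

section
/- If (f_t, g_t) and (f_t', g_t') are equivalent one-parameter formal deformations of a Hom-Lie-Yamaguti algebra (L, [·,·], {·,·,·}, α), then their infinitesimals differ by a coboundary: (f₁ − f₁', g₁ − g₁') = (δ_I¹φ₁, δ_{II}¹φ₁) for some 1-Hom-cochain φ₁; hence (f₁, g₁) and (f₁', g₁') belong to the same cohomology class in HomH²(L,L) × HomH³(L,L). -/
variable {K L : Type*} [Field K] [AddCommGroup L] [Module K L]

private lemma sumA1 {M : Type*} [AddCommMonoid M] (f : ℕ × ℕ → M) :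
    ∑ p ∈ Finset.HasAntidiagonal.antidiagonal 1, f p = f (0, 1) + f (1, 0) := by
  rw [show (Finset.HasAntidiagonal.antidiagonal 1 : Finset (ℕ × ℕ)) = {(0, 1), (1, 0)} from by decide,
    Finset.sum_pair (by decide)]

private lemma sumA0 {M : Type*} [AddCommMonoid M] (f : ℕ × ℕ → M) :
    ∑ p ∈ Finset.HasAntidiagonal.antidiagonal 0, f p = f (0, 0) := by
  rw [show (Finset.HasAntidiagonal.antidiagonal 0 : Finset (ℕ × ℕ)) = {(0, 0)} from by decide,
    Finset.sum_singleton]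

/-- The infinitesimals of equivalent deformations differ by the coboundary of a
1-Hom-cochain, hence give the same class in `HomH² × HomH³`. -/
theorem equivalent_infinitesimals_cohomologous (H : HLY K L)
    (D D' : Deform H) (E : DefEquiv H D D') :
    ∃ φ : L →ₗ[K] L, (∀ x, φ (H.a x) = H.a (φ x)) ∧
      (∀ x y, D.f 1 x y - D'.f 1 x y = d1I H φ x y) ∧
      (∀ x y z, D.g 1 x y z - D'.g 1 x y z = d1II H φ x y z) := by
  refine ⟨E.Φ 1, E.Φa 1, ?_, ?_⟩
  · intro x y
    have h := E.hf 1 x y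
    simp only [sumA1, sumA0, E.Φ0, D.f0, D'.f0, LinearMap.id_coe, id_eq] at h
    rw [← sub_eq_zero] at h ⊢
    rw [← h, d1I]; abel
  · intro x y z
    have h := E.hg 1 x y z
    simp only [sumA1, sumA0, E.Φ0, D.g0, D'.g0, LinearMap.id_coe, id_eq] at h
    rw [← sub_eq_zero] at h ⊢
    rw [← h, d1II]; abel
end

section
/- For a Hom-Lie-Yamaguti algebra (L, [·,·], {·,·,·}, α) and any pair (f, g) of a 2-Hom-cochain and a 3-Hom-cochain, the composition of coboundary operators vanishes: δ_I³(δ_I²f) = 0 and δ_{II}³(δ_{II}²g) = 0. -/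
variable {K L : Type*} [Field K] [AddCommGroup L] [Module K L]

/-- `α²`. -/
def a2 (H : HLY K L) (x : L) : L := H.a (H.a x)
/-- `α³`. -/
def a3 (H : HLY K L) (x : L) : L := H.a (H.a (H.a x))
/-- `α⁴`. -/
def a4 (H : HLY K L) (x : L) : L := H.a (H.a (H.a (H.a x)))

/-- Third coboundary `δ_I³` (on a pair of a 4-cochain `f` and a 5-cochain `g`). -/
def d3I (H : HLY K L) (f : L → L → L → L → L) (g : L → L → L → L → L → L)
    (x1 x2 x3 x4 x5 x6 : L) : L :=
  H.tr (a3 H x1) (a3 H x2) (f x3 x4 x5 x6) - H.tr (a3 H x3) (a3 H x4) (f x1 x2 x5 x6)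
    - f (H.tr x1 x2 x3) (a2 H x4) (a2 H x5) (a2 H x6)
    - f (a2 H x3) (H.tr x1 x2 x4) (a2 H x5) (a2 H x6)
    - f (a2 H x3) (a2 H x4) (H.tr x1 x2 x5) (a2 H x6)
    - f (a2 H x3) (a2 H x4) (a2 H x5) (H.tr x1 x2 x6)
    + f (a2 H x1) (a2 H x2) (H.tr x3 x4 x5) (a2 H x6)
    + f (a2 H x1) (a2 H x2) (a2 H x5) (H.tr x3 x4 x6)
    - g (H.a x1) (H.a x2) (H.a x3) (H.a x4) (H.br x5 x6)
    + H.br (a4 H x5) (g x1 x2 x3 x4 x6) + H.br (g x1 x2 x3 x4 x5) (a4 H x6)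

/-- Third coboundary `δ_{II}³` (on a 5-cochain `g`). -/
def d3II (H : HLY K L) (g : L → L → L → L → L → L)
    (x1 x2 x3 x4 x5 x6 x7 : L) : L :=
  H.tr (a4 H x1) (a4 H x2) (g x3 x4 x5 x6 x7)
    - H.tr (a4 H x3) (a4 H x4) (g x1 x2 x5 x6 x7)
    + H.tr (a4 H x5) (a4 H x6) (g x1 x2 x3 x4 x7)
    - g (H.tr x1 x2 x3) (a2 H x4) (a2 H x5) (a2 H x6) (a2 H x7)
    - g (a2 H x3) (H.tr x1 x2 x4) (a2 H x5) (a2 H x6) (a2 H x7)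
    - g (a2 H x3) (a2 H x4) (H.tr x1 x2 x5) (a2 H x6) (a2 H x7)
    - g (a2 H x3) (a2 H x4) (a2 H x5) (H.tr x1 x2 x6) (a2 H x7)
    - g (a2 H x3) (a2 H x4) (a2 H x5) (a2 H x6) (H.tr x1 x2 x7)
    + g (a2 H x1) (a2 H x2) (H.tr x3 x4 x5) (a2 H x6) (a2 H x7)
    + g (a2 H x1) (a2 H x2) (a2 H x5) (H.tr x3 x4 x6) (a2 H x7)
    + g (a2 H x1) (a2 H x2) (a2 H x5) (a2 H x6) (H.tr x3 x4 x7)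
    - g (a2 H x1) (a2 H x2) (a2 H x3) (a2 H x4) (H.tr x5 x6 x7)
    + H.tr (g x1 x2 x3 x4 x5) (a4 H x6) (a4 H x7)
    - H.tr (g x1 x2 x3 x4 x6) (a4 H x5) (a4 H x7)

set_option maxHeartbeats 4000000 in
/-- `(δ_I³, δ_{II}³) ∘ (δ_I², δ_{II}²) = 0`. -/
theorem d3_d2_eq_zero (H : HLY K L)
    (f : L →ₗ[K] L →ₗ[K] L) (g : L →ₗ[K] L →ₗ[K] L →ₗ[K] L)
    (hf0 : ∀ x, f x x = 0) (hfa : ∀ x y, f (H.a x) (H.a y) = H.a (f x y))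
    (hg0 : ∀ x y, g x x y = 0)
    (hga : ∀ x y z, g (H.a x) (H.a y) (H.a z) = H.a (g x y z)) :
    (∀ x1 x2 x3 x4 x5 x6,
      d3I H (d2I H (fun x y => f x y) (fun x y z => g x y z))
        (d2II H (fun x y z => g x y z)) x1 x2 x3 x4 x5 x6 = 0) ∧
    (∀ x1 x2 x3 x4 x5 x6 x7,
      d3II H (d2II H (fun x y z => g x y z)) x1 x2 x3 x4 x5 x6 x7 = 0) := by
  
  have brsw : ∀ u v : L, H.br u v = - H.br v u := by
    intro u v
    have t := H.br_alt (u + v)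
    simp only [map_add, LinearMap.add_apply, H.br_alt] at t
    linear_combination (norm := abel) t
  have trsw : ∀ u v w : L, H.tr u v w = - H.tr v u w := by
    intro u v w
    have t := H.tr_alt (u + v) w
    simp only [map_add, LinearMap.add_apply, H.tr_alt] at t
    linear_combination (norm := abel) t
  have fsw : ∀ u v : L, f u v = - f v u := by
    intro u v
    have t := hf0 (u + v)
    simp only [map_add, LinearMap.add_apply, hf0] at t
    linear_combination (norm := abel) t
  have gsw : ∀ u v w : L, g u v w = - g v u w := by
    intro u v w
    have t := hg0 (u + v) w
    simp only [map_add, LinearMap.add_apply, hg0] at t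
    linear_combination (norm := abel) t
  constructor
  · intro x1 x2 x3 x4 x5 x6
    have ah0 := H.ax7 (H.a (H.a (x1))) (H.a (H.a (x2))) (g (x3) (x4) (x6)) (H.a (H.a (x5)))
    simp only [map_add, map_sub, map_neg, LinearMap.add_apply, LinearMap.sub_apply, LinearMap.neg_apply, H.a_br, H.a_tr, ← hfa, ← hga] at ah0
    have ah1 := H.ax7 (H.a (H.a (x1))) (H.a (H.a (x2))) (g (x3) (x4) (x5)) (H.a (H.a (x6)))
    simp only [map_add, map_sub, map_neg, LinearMap.add_apply, LinearMap.sub_apply, LinearMap.neg_apply, H.a_br, H.a_tr, ← hfa, ← hga] at ah1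
    have ah2 := H.ax7 (H.a (H.a (x3))) (H.a (H.a (x4))) (g (x1) (x2) (x6)) (H.a (H.a (x5)))
    simp only [map_add, map_sub, map_neg, LinearMap.add_apply, LinearMap.sub_apply, LinearMap.neg_apply, H.a_br, H.a_tr, ← hfa, ← hga] at ah2
    have ah3 := H.ax7 (H.a (H.a (x3))) (H.a (H.a (x4))) (g (x1) (x2) (x5)) (H.a (H.a (x6)))
    simp only [map_add, map_sub, map_neg, LinearMap.add_apply, LinearMap.sub_apply, LinearMap.neg_apply, H.a_br, H.a_tr, ← hfa, ← hga] at ah3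
    have ah4 := H.ax8 (H.a (x1)) (H.a (x2)) (H.a (x3)) (H.a (x4)) (f (x5) (x6))
    simp only [map_add, map_sub, map_neg, LinearMap.add_apply, LinearMap.sub_apply, LinearMap.neg_apply, H.a_br, H.a_tr, ← hfa, ← hga] at ah4
    have ah5 := congrArg (fun m => f (H.a (H.a (H.a (H.a x6)))) m) (H.ax8 x1 x2 x3 x4 x5)
    simp only [map_add, map_sub, map_neg, LinearMap.add_apply, LinearMap.sub_apply, LinearMap.neg_apply, H.a_br, H.a_tr, ← hfa, ← hga] at ah5
    have ah6 := congrArg (fun m => f (H.a (H.a (H.a (H.a x5)))) m) (H.ax8 x1 x2 x3 x4 x6)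
    simp only [map_add, map_sub, map_neg, LinearMap.add_apply, LinearMap.sub_apply, LinearMap.neg_apply, H.a_br, H.a_tr, ← hfa, ← hga] at ah6
    have ah7 := H.ax7 (g (x1) (x2) (x3)) (H.a (H.a (x4))) (H.a (H.a (x5))) (H.a (H.a (x6)))
    simp only [map_add, map_sub, map_neg, LinearMap.add_apply, LinearMap.sub_apply, LinearMap.neg_apply, H.a_br, H.a_tr, ← hfa, ← hga] at ah7
    have ah8 := H.ax7 (g (x1) (x2) (x4)) (H.a (H.a (x3))) (H.a (H.a (x5))) (H.a (H.a (x6)))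
    simp only [map_add, map_sub, map_neg, LinearMap.add_apply, LinearMap.sub_apply, LinearMap.neg_apply, H.a_br, H.a_tr, ← hfa, ← hga] at ah8
    have ah9 := congrArg (fun m => g (H.a (H.a (H.a x3))) (H.a (H.a (H.a x4))) m) (H.ax7 x1 x2 x5 x6)
    simp only [map_add, map_sub, map_neg, LinearMap.add_apply, LinearMap.sub_apply, LinearMap.neg_apply, H.a_br, H.a_tr, ← hfa, ← hga] at ah9
    have ah10 := congrArg (fun m => g (H.a (H.a (H.a x1))) (H.a (H.a (H.a x2))) m) (H.ax7 x3 x4 x5 x6)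
    simp only [map_add, map_sub, map_neg, LinearMap.add_apply, LinearMap.sub_apply, LinearMap.neg_apply, H.a_br, H.a_tr, ← hfa, ← hga] at ah10
    have as0 := congrArg (fun m => H.br (H.a (H.a (H.a (H.a (x5))))) (m)) (trsw (g (x1) (x2) (x4)) (H.a (H.a (x3))) (H.a (H.a (x6))))
    simp only [map_add, map_sub, map_neg, LinearMap.add_apply, LinearMap.sub_apply, LinearMap.neg_apply, H.a_br, H.a_tr, ← hfa, ← hga] at as0
    have as1 := congrArg (fun m => H.br (H.a (H.a (H.a (H.a (x6))))) (m)) (trsw (g (x1) (x2) (x4)) (H.a (H.a (x3))) (H.a (H.a (x5))))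
    simp only [map_add, map_sub, map_neg, LinearMap.add_apply, LinearMap.sub_apply, LinearMap.neg_apply, H.a_br, H.a_tr, ← hfa, ← hga] at as1
    have as2 := congrArg (fun m => H.tr (H.a (H.a (H.a (x3)))) (H.a (H.a (H.a (x4)))) (m)) (brsw (g (x1) (x2) (x6)) (H.a (H.a (x5))))
    simp only [map_add, map_sub, map_neg, LinearMap.add_apply, LinearMap.sub_apply, LinearMap.neg_apply, H.a_br, H.a_tr, ← hfa, ← hga] at as2
    have as3 := congrArg (fun m => H.tr (H.a (H.a (H.a (x1)))) (H.a (H.a (H.a (x2)))) (m)) (brsw (g (x3) (x4) (x6)) (H.a (H.a (x5))))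
    simp only [map_add, map_sub, map_neg, LinearMap.add_apply, LinearMap.sub_apply, LinearMap.neg_apply, H.a_br, H.a_tr, ← hfa, ← hga] at as3
    simp only [d3I, d2I, d2II, a2, a3, a4]
    simp only [map_add, map_sub, map_neg, LinearMap.add_apply, LinearMap.sub_apply, LinearMap.neg_apply, H.a_br, H.a_tr, ← hfa, ← hga]
    linear_combination (norm := abel)
      ah0 - ah1 - ah2 + ah3 + ah4 + ah5 - ah6 + ah7 - ah8 + ah9 - ah10 - as0 - (brsw (H.tr (g (x1) (x2) (x4)) (H.a (H.a (x3))) (H.a (H.a (x5)))) (H.a (H.a (H.a (H.a (x6)))))) + as1 + (trsw (g (H.a (x1)) (H.a (x2)) (H.a (x4))) (H.a (H.a (H.a (x3)))) (H.br (H.a (H.a (x5))) (H.a (H.a (x6))))) - (brsw (H.tr (H.a (H.a (x3))) (H.a (H.a (x4))) (g (x1) (x2) (x6))) (H.a (H.a (H.a (H.a (x5)))))) + as2 + (brsw (H.tr (H.a (H.a (x1))) (H.a (H.a (x2))) (g (x3) (x4) (x6))) (H.a (H.a (H.a (H.a (x5)))))) - as3 - (brsw (H.tr (H.a (H.a (x3)))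 (g (x1) (x2) (x4)) (H.a (H.a (x5)))) (H.a (H.a (H.a (H.a (x6)))))) - (brsw (H.tr (H.a (H.a (x3))) (H.a (H.a (x4))) (H.a (H.a (x5)))) (g (H.a (H.a (x1))) (H.a (H.a (x2))) (H.a (H.a (x6))))) - (fsw (H.tr (H.a (H.a (x1))) (H.a (H.a (x2))) (H.tr (x3) (x4) (x5))) (H.a (H.a (H.a (H.a (x6)))))) + (brsw (H.tr (H.a (H.a (x1))) (H.a (H.a (x2))) (H.a (H.a (x5)))) (g (H.a (H.a (x3))) (H.a (H.a (x4))) (H.a (H.a (x6))))) + (fsw (H.tr (H.a (H.a (x3))) (H.a (H.a (x4))) (H.tr (x1) (x2) (x5))) (H.a (H.a (H.a (H.a (x6)))))) + (fsw (H.tr (H.a (H.a (x3))) (H.tr (x1) (x2) (x4)) (H.a (H.a (x5)))) (H.a (H.a (H.a (H.a (x6)))))) + (fsw (H.tr (H.tr (x1) (x2) (x3)) (H.a (H.a (x4))) (H.a (H.a (x5)))) (H.a (H.a (H.a (H.a (x6))))))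
  · intro x1 x2 x3 x4 x5 x6 x7
    have bh0 := H.ax8 (H.a (H.a (x1))) (H.a (H.a (x2))) (H.a (H.a (x3))) (H.a (H.a (x4))) (g (x5) (x6) (x7))
    simp only [map_add, map_sub, map_neg, LinearMap.add_apply, LinearMap.sub_apply, LinearMap.neg_apply, H.a_br, H.a_tr, ← hfa, ← hga] at bh0
    have bh1 := congrArg (fun m => g (H.a (H.a (H.a (H.a x6)))) m (H.a (H.a (H.a (H.a x7))))) (H.ax8 x1 x2 x3 x4 x5)
    simp only [map_add, map_sub, map_neg, LinearMap.add_apply, LinearMap.sub_apply, LinearMap.neg_apply, H.a_br, H.a_tr, ← hfa, ← hga] at bh1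
    have bh2 := congrArg (fun m => g (H.a (H.a (H.a (H.a x5)))) m (H.a (H.a (H.a (H.a x7))))) (H.ax8 x1 x2 x3 x4 x6)
    simp only [map_add, map_sub, map_neg, LinearMap.add_apply, LinearMap.sub_apply, LinearMap.neg_apply, H.a_br, H.a_tr, ← hfa, ← hga] at bh2
    have bh3 := H.ax8 (H.a (H.a (x1))) (H.a (H.a (x2))) (g (x3) (x4) (x6)) (H.a (H.a (x5))) (H.a (H.a (x7)))
    simp only [map_add, map_sub, map_neg, LinearMap.add_apply, LinearMap.sub_apply, LinearMap.neg_apply, H.a_br, H.a_tr, ← hfa, ← hga] at bh3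
    have bh4 := H.ax8 (H.a (H.a (x1))) (H.a (H.a (x2))) (H.a (H.a (x5))) (H.a (H.a (x6))) (g (x3) (x4) (x7))
    simp only [map_add, map_sub, map_neg, LinearMap.add_apply, LinearMap.sub_apply, LinearMap.neg_apply, H.a_br, H.a_tr, ← hfa, ← hga] at bh4
    have bh5 := H.ax8 (H.a (H.a (x1))) (H.a (H.a (x2))) (g (x3) (x4) (x5)) (H.a (H.a (x6))) (H.a (H.a (x7)))
    simp only [map_add, map_sub, map_neg, LinearMap.add_apply, LinearMap.sub_apply, LinearMap.neg_apply, H.a_br, H.a_tr, ← hfa, ← hga] at bh5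
    have bh6 := H.ax8 (H.a (H.a (x3))) (H.a (H.a (x4))) (g (x1) (x2) (x6)) (H.a (H.a (x5))) (H.a (H.a (x7)))
    simp only [map_add, map_sub, map_neg, LinearMap.add_apply, LinearMap.sub_apply, LinearMap.neg_apply, H.a_br, H.a_tr, ← hfa, ← hga] at bh6
    have bh7 := H.ax8 (H.a (H.a (x3))) (H.a (H.a (x4))) (H.a (H.a (x5))) (H.a (H.a (x6))) (g (x1) (x2) (x7))
    simp only [map_add, map_sub, map_neg, LinearMap.add_apply, LinearMap.sub_apply, LinearMap.neg_apply, H.a_br, H.a_tr, ← hfa, ← hga] at bh7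
    have bh8 := H.ax8 (H.a (H.a (x3))) (H.a (H.a (x4))) (g (x1) (x2) (x5)) (H.a (H.a (x6))) (H.a (H.a (x7)))
    simp only [map_add, map_sub, map_neg, LinearMap.add_apply, LinearMap.sub_apply, LinearMap.neg_apply, H.a_br, H.a_tr, ← hfa, ← hga] at bh8
    have bh9 := H.ax8 (g (x1) (x2) (x3)) (H.a (H.a (x4))) (H.a (H.a (x5))) (H.a (H.a (x6))) (H.a (H.a (x7)))
    simp only [map_add, map_sub, map_neg, LinearMap.add_apply, LinearMap.sub_apply, LinearMap.neg_apply, H.a_br, H.a_tr, ← hfa, ← hga] at bh9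
    have bh10 := H.ax8 (g (x1) (x2) (x4)) (H.a (H.a (x3))) (H.a (H.a (x5))) (H.a (H.a (x6))) (H.a (H.a (x7)))
    simp only [map_add, map_sub, map_neg, LinearMap.add_apply, LinearMap.sub_apply, LinearMap.neg_apply, H.a_br, H.a_tr, ← hfa, ← hga] at bh10
    have bh11 := congrArg (fun m => g (H.a (H.a (H.a (H.a x5)))) (H.a (H.a (H.a (H.a x6)))) m) (H.ax8 x1 x2 x3 x4 x7)
    simp only [map_add, map_sub, map_neg, LinearMap.add_apply, LinearMap.sub_apply, LinearMap.neg_apply, H.a_br, H.a_tr, ← hfa, ← hga] at bh11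
    have bh12 := congrArg (fun m => g (H.a (H.a (H.a (H.a x3)))) (H.a (H.a (H.a (H.a x4)))) m) (H.ax8 x1 x2 x5 x6 x7)
    simp only [map_add, map_sub, map_neg, LinearMap.add_apply, LinearMap.sub_apply, LinearMap.neg_apply, H.a_br, H.a_tr, ← hfa, ← hga] at bh12
    have bh13 := congrArg (fun m => g (H.a (H.a (H.a (H.a x1)))) (H.a (H.a (H.a (H.a x2)))) m) (H.ax8 x3 x4 x5 x6 x7)
    simp only [map_add, map_sub, map_neg, LinearMap.add_apply, LinearMap.sub_apply, LinearMap.neg_apply, H.a_br, H.a_tr, ← hfa, ← hga] at bh13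
    have bs0 := congrArg (fun m => H.tr (H.a (H.a (H.a (H.a (x5))))) (H.a (H.a (H.a (H.a (x6))))) (m)) (trsw (g (x1) (x2) (x4)) (H.a (H.a (x3))) (H.a (H.a (x7))))
    simp only [map_add, map_sub, map_neg, LinearMap.add_apply, LinearMap.sub_apply, LinearMap.neg_apply, H.a_br, H.a_tr, ← hfa, ← hga] at bs0
    have bs1 := congrArg (fun m => H.tr (H.a (H.a (H.a (H.a (x5))))) (m) (H.a (H.a (H.a (H.a (x7)))))) (trsw (g (x1) (x2) (x4)) (H.a (H.a (x3))) (H.a (H.a (x6))))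
    simp only [map_add, map_sub, map_neg, LinearMap.add_apply, LinearMap.sub_apply, LinearMap.neg_apply, H.a_br, H.a_tr, ← hfa, ← hga] at bs1
    have bs2 := congrArg (fun m => H.tr (H.a (H.a (H.a (H.a (x6))))) (m) (H.a (H.a (H.a (H.a (x7)))))) (trsw (g (x1) (x2) (x4)) (H.a (H.a (x3))) (H.a (H.a (x5))))
    simp only [map_add, map_sub, map_neg, LinearMap.add_apply, LinearMap.sub_apply, LinearMap.neg_apply, H.a_br, H.a_tr, ← hfa, ← hga] at bs2
    have bs3 := congrArg (fun m => H.tr (H.a (H.a (H.a (H.a (x3))))) (H.a (H.a (H.a (H.a (x4))))) (m)) (trsw (g (x1) (x2) (x6)) (H.a (H.a (x5))) (H.a (H.a (x7))))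
    simp only [map_add, map_sub, map_neg, LinearMap.add_apply, LinearMap.sub_apply, LinearMap.neg_apply, H.a_br, H.a_tr, ← hfa, ← hga] at bs3
    have bs4 := congrArg (fun m => H.tr (H.a (H.a (H.a (H.a (x1))))) (H.a (H.a (H.a (H.a (x2))))) (m)) (trsw (g (x3) (x4) (x6)) (H.a (H.a (x5))) (H.a (H.a (x7))))
    simp only [map_add, map_sub, map_neg, LinearMap.add_apply, LinearMap.sub_apply, LinearMap.neg_apply, H.a_br, H.a_tr, ← hfa, ← hga] at bs4
    simp only [d3II, d2II, a2, a3, a4]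
    simp only [map_add, map_sub, map_neg, LinearMap.add_apply, LinearMap.sub_apply, LinearMap.neg_apply, H.a_br, H.a_tr, ← hfa, ← hga]
    linear_combination (norm := abel)
      bh0 + bh1 - bh2 + bh3 - bh4 - bh5 - bh6 + bh7 + bh8 + bh9 - bh10 - bh11 + bh12 - bh13 - bs0 - bs1 - (trsw (H.tr (g (x1) (x2) (x4)) (H.a (H.a (x3))) (H.a (H.a (x5)))) (H.a (H.a (H.a (H.a (x6))))) (H.a (H.a (H.a (H.a (x7)))))) + bs2 + (trsw (g (H.a (H.a (x1))) (H.a (H.a (x2))) (H.a (H.a (x4)))) (H.a (H.a (H.a (H.a (x3))))) (H.tr (H.a (H.a (x5))) (H.a (H.a (x6))) (H.a (H.a (x7))))) - (trsw (g (H.a (H.a (x1))) (H.a (H.a (x2))) (H.a (H.a (x6)))) (H.a (H.a (H.a (H.a (x5))))) (H.tr (H.a (H.a (x3))) (H.a (H.a (x4))) (H.a (H.a (x7))))) + bs3 + (trsw (g (H.a (H.a (x3))) (H.a (H.a (x4))) (H.a (H.a (x6)))) (H.a (H.a (H.a (H.a (x5))))) (H.tr (H.a (H.a (x1))) (H.a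 (H.a (x2))) (H.a (H.a (x7))))) - bs4 + (trsw (g (H.a (H.a (x3))) (H.a (H.a (x4))) (H.tr (x1) (x2) (x6))) (H.a (H.a (H.a (H.a (x5))))) (H.a (H.a (H.a (H.a (x7)))))) + (trsw (g (H.a (H.a (x3))) (H.tr (x1) (x2) (x4)) (H.a (H.a (x6)))) (H.a (H.a (H.a (H.a (x5))))) (H.a (H.a (H.a (H.a (x7)))))) + (trsw (g (H.tr (x1) (x2) (x3)) (H.a (H.a (x4))) (H.a (H.a (x6)))) (H.a (H.a (H.a (H.a (x5))))) (H.a (H.a (H.a (H.a (x7)))))) - (trsw (g (H.a (H.a (x1))) (H.a (H.a (x2))) (H.tr (x3) (x4) (x6))) (H.a (H.a (H.a (H.a (x5))))) (H.a (H.a (H.a (H.a (x7)))))) + (trsw (H.tr (H.a (H.a (x3))) (g (x1) (x2) (x4)) (H.a (H.a (x6)))) (H.a (H.a (H.a (H.a (x5))))) (H.a (H.a (H.a (H.a (x7)))))) + (trsw (H.tr (g (x1) (x2) (x3)) (H.a (H.a (x4))) (H.a (H.a (x6)))) (H.a (H.a (H.a (H.a (x5))))) (H.a (H.a (H.a (H.a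 (x7)))))) - (trsw (H.tr (H.a (H.a (x3))) (g (x1) (x2) (x4)) (H.a (H.a (x5)))) (H.a (H.a (H.a (H.a (x6))))) (H.a (H.a (H.a (H.a (x7)))))) - (gsw (H.tr (H.a (H.a (x1))) (H.a (H.a (x2))) (H.tr (x3) (x4) (x5))) (H.a (H.a (H.a (H.a (x6))))) (H.a (H.a (H.a (H.a (x7)))))) - (trsw (H.tr (H.a (H.a (x3))) (H.a (H.a (x4))) (H.a (H.a (x5)))) (g (H.a (H.a (x1))) (H.a (H.a (x2))) (H.a (H.a (x6)))) (H.a (H.a (H.a (H.a (x7)))))) + (gsw (H.tr (H.a (H.a (x3))) (H.a (H.a (x4))) (H.tr (x1) (x2) (x5))) (H.a (H.a (H.a (H.a (x6))))) (H.a (H.a (H.a (H.a (x7)))))) + (trsw (H.tr (H.a (H.a (x1))) (H.a (H.a (x2))) (H.a (H.a (x5)))) (g (H.a (H.a (x3))) (H.a (H.a (x4))) (H.a (H.a (x6)))) (H.a (H.a (H.a (H.a (x7)))))) + (gsw (H.tr (H.a (H.a (x3))) (H.tr (x1) (x2) (x4)) (H.a (H.a (x5)))) (H.a (H.a (H.a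 (H.a (x6))))) (H.a (H.a (H.a (H.a (x7)))))) + (gsw (H.tr (H.tr (x1) (x2) (x3)) (H.a (H.a (x4))) (H.a (H.a (x5)))) (H.a (H.a (H.a (H.a (x6))))) (H.a (H.a (H.a (H.a (x7))))))
end
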